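/- Let (V, μ) be an associative algebra over a field K and let α : V → V be an algebra endomorphism (a linear map with α(μ(x,y)) = μ(α(x), α(y)) for all x, y). Then the triple V_α = (V, α∘μ, α), whose product is μ_α(x,y) = α(μ(x,y)), is a hom-associative algebra; that is, μ_α is bilinear and satisfies α(μ_α(x,y)) = μ_α(α(x), α(y)) and μ_α(α(x), μ_α(y,z)) = μ_α(μ_α(x,y), α(z)) for all x, y, z ∈ V. -/
import Mathlib


/-- Yau twist of an associative algebra is hom-associative.
If `(V, μ)` is an associative algebra over a field `K` and `α` is an algebra
endomorphism, then `V_α = (V, α∘μ, α)` is a hom-associative algebra: the product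
`μ_α(x,y) = α(μ(x,y))` (bilinear, being a composition of linear maps) satisfies
multiplicativity and hom-associativity. -/
theorem stmt_0 {K V : Type*} [Field K] [AddCommGroup V] [Module K V]
    (μ : V →ₗ[K] V →ₗ[K] V) (α : V →ₗ[K] V)
    (hassoc : ∀ x y z : V, μ (μ x y) z = μ x (μ y z))
    (hmult : ∀ x y : V, α (μ x y) = μ (α x) (α y)) :
    let μα : V → V → V := fun x y => α (μ x y)
    (∀ x y : V, α (μα x y) = μα (α x) (α y)) ∧
    (∀ x y z : V, μα (α x) (μα y z) = μα (μα x y) (α z)) := by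
  intro μα
  refine ⟨fun x y => ?_, fun x y z => ?_⟩
  · simp only [μα, hmult]
  simp only [μα, hmult, hassoc]
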